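/- Let w be an A₂^d weight and J a dyadic interval with dyadic parent Ĵ. Then |⟨h_Ĵ, h^{w^{-1}}_Ĵ⟩_{w^{-1}} · ⟨h_J, h^w_J⟩_w| ≤ √2 [w]_{A₂^d}^{1/2}. -/

import Mathlib

open MeasureTheory Set

/-- A dyadic interval `[k·2⁻ⁿ, (k+1)·2⁻ⁿ)`. -/
structure DyadicI where
  n : ℤ
  k : ℤ

namespace DyadicI

noncomputable def len (I : DyadicI) : ℝ := (2:ℝ) ^ (-I.n)

noncomputable def left (I : DyadicI) : ℝ := I.k * I.len

noncomputable def set (I : DyadicI) : Set ℝ := Set.Ico I.left (I.left + I.len)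

/-- left half -/
def minus (I : DyadicI) : DyadicI := ⟨I.n + 1, 2 * I.k⟩

/-- right half -/
def plus (I : DyadicI) : DyadicI := ⟨I.n + 1, 2 * I.k + 1⟩

/-- dyadic parent -/
def parent (I : DyadicI) : DyadicI := ⟨I.n - 1, Int.fdiv I.k 2⟩

/-- `w(I) = ∫_I w` -/
noncomputable def intg (w : ℝ → ℝ) (I : DyadicI) : ℝ := ∫ x in I.set, w x

/-- `⟨w⟩_I = |I|⁻¹ ∫_I w` -/
noncomputable def avg (w : ℝ → ℝ) (I : DyadicI) : ℝ := (∫ x in I.set, w x) / I.len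

/-- Haar function `h_I = |I|^{-1/2}(χ_{I₊} - χ_{I₋})` -/
noncomputable def haar (I : DyadicI) : ℝ → ℝ := fun x =>
  (1 / Real.sqrt I.len) *
    (I.plus.set.indicator (fun _ => (1:ℝ)) x - I.minus.set.indicator (fun _ => (1:ℝ)) x)

/-- weighted Haar function `h^w_I` -/
noncomputable def whaar (w : ℝ → ℝ) (I : DyadicI) : ℝ → ℝ := fun x =>
  (1 / Real.sqrt (intg w I)) *
    (Real.sqrt (intg w I.minus / intg w I.plus) * I.plus.set.indicator (fun _ => (1:ℝ)) x
      - Real.sqrt (intg w I.plus / intg w I.minus) * I.minus.set.indicator (fun _ => (1:ℝ)) x)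

/-- `Δ_I w = (⟨w⟩_{I₊} − ⟨w⟩_{I₋})/2` -/
noncomputable def del (w : ℝ → ℝ) (I : DyadicI) : ℝ := (avg w I.plus - avg w I.minus) / 2

end DyadicI

/-- weighted inner product `⟨f,g⟩_w = ∫ f g w` -/
noncomputable def wip (w f g : ℝ → ℝ) : ℝ := ∫ x, f x * g x * w x

/-- a weight: locally integrable and positive a.e. -/
def IsWeight (w : ℝ → ℝ) : Prop :=
  MeasureTheory.LocallyIntegrable w ∧ ∀ᵐ x ∂(volume : Measure ℝ), 0 < w x

noncomputable def winv (w : ℝ → ℝ) : ℝ → ℝ := fun x => (w x)⁻¹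

/-- membership in dyadic A₂ -/
def MemA2d (w : ℝ → ℝ) : Prop :=
  BddAbove (Set.range fun I : DyadicI => DyadicI.avg w I * DyadicI.avg (winv w) I)

/-- the dyadic A₂ characteristic `[w]_{A₂^d}` -/
noncomputable def A2d (w : ℝ → ℝ) : ℝ :=
  ⨆ I : DyadicI, DyadicI.avg w I * DyadicI.avg (winv w) I

/-- the dyadic BMO norm -/
noncomputable def bmoD (b : ℝ → ℝ) : ℝ :=
  ⨆ I : DyadicI, (∫ x in I.set, |b x - DyadicI.avg b I|) / I.len

/-- membership in dyadic BMO -/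
def MemBMOd (b : ℝ → ℝ) : Prop :=
  BddAbove (Set.range fun I : DyadicI => (∫ x in I.set, |b x - DyadicI.avg b I|) / I.len)


namespace DyadicI

lemma len_pos (I : DyadicI) : 0 < I.len := zpow_pos (by norm_num) _

lemma minus_len (I : DyadicI) : I.minus.len = I.len / 2 := by
  simp only [len, minus]
  rw [neg_add, zpow_add₀ (two_ne_zero)]
  norm_num
  ring

lemma plus_len (I : DyadicI) : I.plus.len = I.len / 2 := by
  simp only [len, plus]
  rw [neg_add, zpow_add₀ (two_ne_zero)]
  norm_num
  ring

lemma minus_left (I : DyadicI) : I.minus.left = I.left := by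
  rw [left, minus_len, left]
  show ((2 * I.k : ℤ) : ℝ) * (I.len / 2) = _
  push_cast; ring

lemma plus_left (I : DyadicI) : I.plus.left = I.left + I.len / 2 := by
  rw [left, plus_len, left]
  show ((2 * I.k + 1 : ℤ) : ℝ) * (I.len / 2) = _
  push_cast; ring

lemma minus_set (I : DyadicI) : I.minus.set = Set.Ico I.left (I.left + I.len / 2) := by
  rw [set, minus_left, minus_len]

lemma plus_set (I : DyadicI) : I.plus.set = Set.Ico (I.left + I.len / 2) (I.left + I.len) := by
  rw [set, plus_left, plus_len]
  ring_nf

lemma union_halves (I : DyadicI) : I.minus.set ∪ I.plus.set = I.set := by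
  rw [minus_set, plus_set, set]
  have h := I.len_pos
  exact Set.Ico_union_Ico_eq_Ico (by linarith) (by linarith)

lemma disj (I : DyadicI) : Disjoint I.minus.set I.plus.set := by
  rw [minus_set, plus_set]
  exact Set.Ico_disjoint_Ico_same

lemma measurableSet_set (I : DyadicI) : MeasurableSet I.set := measurableSet_Ico

lemma volume_set (I : DyadicI) : (volume : Measure ℝ) I.set = ENNReal.ofReal I.len := by
  rw [set, Real.volume_Ico]
  congr 1
  ring

lemma volume_set_pos (I : DyadicI) : 0 < (volume : Measure ℝ) I.set := by
  rw [volume_set]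
  exact ENNReal.ofReal_pos.2 I.len_pos

lemma parent_len (I : DyadicI) : I.parent.len = 2 * I.len := by
  simp only [len, parent]
  have h : -(I.n - 1) = 1 + -I.n := by ring
  rw [h, zpow_add₀ (two_ne_zero)]
  norm_num

lemma subset_parent (I : DyadicI) : I.set ⊆ I.parent.set := by
  have hq : I.parent.k = I.k / 2 := Int.fdiv_eq_ediv_of_nonneg _ (by norm_num)
  have hmod := Int.mul_ediv_add_emod I.k 2
  have hmn := Int.emod_nonneg I.k (by norm_num : (2:ℤ) ≠ 0)
  have hml := Int.emod_lt_of_pos I.k (by norm_num : (0:ℤ) < 2)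
  have h1 : 2 * (I.k / 2) ≤ I.k := by omega
  have h2 : I.k + 1 ≤ 2 * (I.k / 2) + 2 := by omega
  have h1' : ((2 * (I.k / 2) : ℤ) : ℝ) ≤ (I.k : ℝ) := by exact_mod_cast h1
  have h2' : ((I.k : ℝ) + 1) ≤ ((2 * (I.k / 2) : ℤ) : ℝ) + 2 := by exact_mod_cast h2
  have hl := I.len_pos
  rw [set, set, left, left, parent_len, hq]
  apply Set.Ico_subset_Ico
  · push_cast at h1' ⊢
    nlinarith
  · push_cast at h2' ⊢
    nlinarith

lemma integrableOn_set {v : ℝ → ℝ} (hv : MeasureTheory.LocallyIntegrable v) (I : DyadicI) :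
    IntegrableOn v I.set := by
  have := hv.integrableOn_isCompact (isCompact_Icc (a := I.left) (b := I.left + I.len))
  exact this.mono_set Set.Ico_subset_Icc_self

lemma intg_nonneg {v : ℝ → ℝ} (hpos : ∀ᵐ x ∂(volume : Measure ℝ), 0 < v x) (I : DyadicI) :
    0 ≤ intg v I := by
  apply MeasureTheory.setIntegral_nonneg_ae I.measurableSet_set
  filter_upwards [hpos] with x hx _
  exact hx.le

lemma intg_pos {v : ℝ → ℝ} (hpos : ∀ᵐ x ∂(volume : Measure ℝ), 0 < v x) {I : DyadicI}
    (hi : IntegrableOn v I.set) : 0 < intg v I := by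
  rw [intg, MeasureTheory.setIntegral_pos_iff_support_of_nonneg_ae
    (MeasureTheory.ae_restrict_of_ae (hpos.mono fun x h => h.le)) hi]
  have hN : (volume : Measure ℝ) {x | ¬ 0 < v x} = 0 := hpos
  have hsub : I.set \ {x | ¬ 0 < v x} ⊆ Function.support v ∩ I.set := by
    rintro x ⟨hxs, hxn⟩
    refine ⟨fun h0 => hxn ?_, hxs⟩
    simp only [Set.mem_setOf_eq, h0]
    exact lt_irrefl 0
  calc (0 : ENNReal) < volume I.set := I.volume_set_pos
    _ = volume (I.set \ {x | ¬ 0 < v x}) := (measure_diff_null hN).symm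
    _ ≤ volume (Function.support v ∩ I.set) := measure_mono hsub

lemma intg_split {v : ℝ → ℝ} {I : DyadicI} (hm : IntegrableOn v I.minus.set)
    (hp : IntegrableOn v I.plus.set) : intg v I = intg v I.minus + intg v I.plus := by
  rw [intg, intg, intg, ← I.union_halves,
    MeasureTheory.setIntegral_union I.disj I.plus.measurableSet_set hm hp]

/-- Main estimate for one factor: `|⟨h_I, h^v_I⟩_v| ≤ √⟨v⟩_I`. -/
lemma factor (v : ℝ → ℝ) (hpos : ∀ᵐ x ∂(volume : Measure ℝ), 0 < v x) (I : DyadicI) :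
    |wip v I.haar (I.whaar v)| ≤ Real.sqrt (I.avg v) := by
  by_cases hm : IntegrableOn v I.minus.set
  · by_cases hp : IntegrableOn v I.plus.set
    · -- main case
      have hVm : 0 < intg v I.minus := intg_pos hpos hm
      have hVp : 0 < intg v I.plus := intg_pos hpos hp
      have hV : intg v I = intg v I.minus + intg v I.plus := intg_split hm hp
      have hVpos : 0 < intg v I := by rw [hV]; positivity
      set Vm := intg v I.minus with hVm_def
      set Vp := intg v I.plus with hVp_def
      set c := 1 / Real.sqrt I.len with hc_def
      set d := 1 / Real.sqrt (intg v I) with hd_def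
      have hcpos : 0 < c := by
        rw [hc_def]
        exact one_div_pos.2 (Real.sqrt_pos.2 I.len_pos)
      have hdpos : 0 < d := by
        rw [hd_def]
        exact one_div_pos.2 (Real.sqrt_pos.2 hVpos)
      have key : (fun x => I.haar x * I.whaar v x * v x)
          = fun x => (c * d * Real.sqrt (Vm / Vp)) * I.plus.set.indicator v x
              + (c * d * Real.sqrt (Vp / Vm)) * I.minus.set.indicator v x := by
        funext x
        by_cases h1 : x ∈ I.minus.set <;> by_cases h2 : x ∈ I.plus.set
        · exact absurd h2 (Set.disjoint_left.mp I.disj h1)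
        · simp only [haar, whaar, Set.indicator_of_mem h1, Set.indicator_of_notMem h2,
            ← hVm_def, ← hVp_def, ← hc_def, ← hd_def]
          ring
        · simp only [haar, whaar, Set.indicator_of_notMem h1, Set.indicator_of_mem h2,
            ← hVm_def, ← hVp_def, ← hc_def, ← hd_def]
          ring
        · simp only [haar, whaar, Set.indicator_of_notMem h1, Set.indicator_of_notMem h2,
            ← hVm_def, ← hVp_def, ← hc_def, ← hd_def]
          ring
      have hip : Integrable (fun x => (c * d * Real.sqrt (Vm / Vp)) * I.plus.set.indicator v x) :=
        ((integrable_indicator_iff I.plus.measurableSet_set).2 hp).const_mul _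
      have him : Integrable (fun x => (c * d * Real.sqrt (Vp / Vm)) * I.minus.set.indicator v x) :=
        ((integrable_indicator_iff I.minus.measurableSet_set).2 hm).const_mul _
      have hwip : wip v I.haar (I.whaar v)
          = c * d * Real.sqrt (Vm / Vp) * Vp + c * d * Real.sqrt (Vp / Vm) * Vm := by
        rw [wip, key, MeasureTheory.integral_add hip him, MeasureTheory.integral_const_mul,
          MeasureTheory.integral_const_mul,
          MeasureTheory.integral_indicator I.plus.measurableSet_set,
          MeasureTheory.integral_indicator I.minus.measurableSet_set]
        rfl
      have e1 : Real.sqrt (Vm / Vp) * Vp = Real.sqrt Vm * Real.sqrt Vp := by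
        rw [Real.sqrt_div hVm.le, div_mul_eq_mul_div, mul_div_assoc, Real.div_sqrt]
      have e2 : Real.sqrt (Vp / Vm) * Vm = Real.sqrt Vp * Real.sqrt Vm := by
        rw [Real.sqrt_div hVp.le, div_mul_eq_mul_div, mul_div_assoc, Real.div_sqrt]
      have hwip2 : wip v I.haar (I.whaar v) = c * d * (2 * (Real.sqrt Vm * Real.sqrt Vp)) := by
        rw [hwip]
        rw [mul_assoc (c * d), mul_assoc (c * d), e1, e2]
        ring
      have hnn : 0 ≤ wip v I.haar (I.whaar v) := by
        rw [hwip2]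
        positivity
      rw [abs_of_nonneg hnn, hwip2]
      have hamgm : 2 * (Real.sqrt Vm * Real.sqrt Vp) ≤ Vm + Vp := by
        have h1 := sq_nonneg (Real.sqrt Vm - Real.sqrt Vp)
        have h2 : Real.sqrt Vm ^ 2 = Vm := Real.sq_sqrt hVm.le
        have h3 : Real.sqrt Vp ^ 2 = Vp := Real.sq_sqrt hVp.le
        nlinarith
      have hfin : c * d * (Vm + Vp) = Real.sqrt (I.avg v) := by
        have hVmp : (0:ℝ) < Vm + Vp := by positivity
        have hs : Real.sqrt (Vm + Vp) * Real.sqrt (Vm + Vp) = Vm + Vp :=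
          Real.mul_self_sqrt hVmp.le
        have hl0 : Real.sqrt I.len ≠ 0 := ne_of_gt (Real.sqrt_pos.2 I.len_pos)
        have hv0 : Real.sqrt (Vm + Vp) ≠ 0 := ne_of_gt (Real.sqrt_pos.2 hVmp)
        rw [avg]
        have h1 : (∫ x in I.set, v x) = Vm + Vp := by rw [← hV]; rfl
        rw [h1, Real.sqrt_div hVmp.le, hc_def, hd_def, hV]
        field_simp
        linear_combination (-1 : ℝ) * hs
      calc c * d * (2 * (Real.sqrt Vm * Real.sqrt Vp)) ≤ c * d * (Vm + Vp) := by
            apply mul_le_mul_of_nonneg_left hamgm (by positivity)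
        _ = Real.sqrt (I.avg v) := hfin
    · -- plus half not integrable : whaar vanishes
      have h0 : intg v I.plus = 0 := MeasureTheory.integral_undef hp
      have hz : I.whaar v = fun _ => 0 := by
        funext x
        simp [whaar, h0, zero_div, div_zero]
      have : wip v I.haar (I.whaar v) = 0 := by
        simp [wip, hz]
      rw [this, abs_zero]
      exact Real.sqrt_nonneg _
  · have h0 : intg v I.minus = 0 := MeasureTheory.integral_undef hm
    have hz : I.whaar v = fun _ => 0 := by
      funext x
      simp [whaar, h0, zero_div, div_zero]
    have : wip v I.haar (I.whaar v) = 0 := by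
      simp [wip, hz]
    rw [this, abs_zero]
    exact Real.sqrt_nonneg _

end DyadicI

/-- `|⟨h_Ĵ, h^{w⁻¹}_Ĵ⟩_{w⁻¹} ⟨h_J, h^w_J⟩_w| ≤ √2 [w]_{A₂^d}^{1/2}`. -/
theorem stmt1 (w : ℝ → ℝ) (hw : IsWeight w) (hA : MemA2d w) (J : DyadicI) :
    |wip (winv w) (DyadicI.haar J.parent) (DyadicI.whaar (winv w) J.parent) *
        wip w (DyadicI.haar J) (DyadicI.whaar w J)| ≤
      Real.sqrt 2 * Real.sqrt (A2d w) := by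
  obtain ⟨hli, hpos⟩ := hw
  have hvpos : ∀ᵐ x ∂(volume : Measure ℝ), 0 < winv w x := by
    filter_upwards [hpos] with x hx
    simpa [winv] using inv_pos.2 hx
  have F1 := DyadicI.factor (winv w) hvpos J.parent
  have F2 := DyadicI.factor w hpos J
  set P := J.parent with hP
  have hlen := J.len_pos
  have hPlen : P.len = 2 * J.len := J.parent_len
  -- avg w J ≤ 2 * avg w P
  have hintmono : DyadicI.intg w J ≤ DyadicI.intg w P := by
    apply MeasureTheory.setIntegral_mono_set (DyadicI.integrableOn_set hli P)
    · exact MeasureTheory.ae_restrict_of_ae (hpos.mono fun x h => h.le)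
    · exact (J.subset_parent).eventuallyLE
  have havgJ : DyadicI.avg w J ≤ 2 * DyadicI.avg w P := by
    rw [DyadicI.avg, DyadicI.avg, hPlen]
    have e : (2:ℝ) * ((∫ x in P.set, w x) / (2 * J.len)) = (∫ x in P.set, w x) / J.len := by
      field_simp
    rw [e, div_le_div_iff_of_pos_right hlen]
    exact hintmono
  have havgwP : 0 ≤ DyadicI.avg w P := div_nonneg (DyadicI.intg_nonneg hpos P) P.len_pos.le
  have havgvP : 0 ≤ DyadicI.avg (winv w) P :=
    div_nonneg (DyadicI.intg_nonneg hvpos P) P.len_pos.le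
  have havgwJ : 0 ≤ DyadicI.avg w J := div_nonneg (DyadicI.intg_nonneg hpos J) J.len_pos.le
  have hA2 : DyadicI.avg w P * DyadicI.avg (winv w) P ≤ A2d w := le_ciSup hA P
  rw [abs_mul]
  calc |wip (winv w) P.haar (P.whaar (winv w))| * |wip w J.haar (J.whaar w)|
      ≤ Real.sqrt (DyadicI.avg (winv w) P) * Real.sqrt (DyadicI.avg w J) :=
        mul_le_mul F1 F2 (abs_nonneg _) (Real.sqrt_nonneg _)
    _ ≤ Real.sqrt (DyadicI.avg (winv w) P) * Real.sqrt (2 * DyadicI.avg w P) := by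
        gcongr
    _ = Real.sqrt (2 * (DyadicI.avg w P * DyadicI.avg (winv w) P)) := by
        rw [← Real.sqrt_mul havgvP]
        congr 1
        ring
    _ ≤ Real.sqrt (2 * A2d w) := by
        apply Real.sqrt_le_sqrt
        linarith
    _ = Real.sqrt 2 * Real.sqrt (A2d w) := Real.sqrt_mul (by norm_num) _
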